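/- With L and H_r as in the tRS Lax matrix setting, the top Hamiltonian satisfies H_n = det(L) = ∏_{k=1}^n p_k; in particular det(L) is independent of ζ_1,…,ζ_n. -/

import Mathlib

open Finset

noncomputable def tRSLax {K : Type*} [Field K] (n : ℕ) (ζ p : Fin n → K) (t : K) :
    Matrix (Fin n) (Fin n) K :=
  Matrix.of fun i j =>
    ((∏ k ∈ univ.erase j, (t⁻¹ * ζ i - t * ζ k)) /
      (∏ k ∈ univ.erase i, (ζ i - ζ k))) * p j

noncomputable def tRSHam {K : Type*} [Field K] (n : ℕ) (ζ p : Fin n → K) (t : K) (r : ℕ) : K :=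
  ∑ I ∈ powersetCard r (univ : Finset (Fin n)),
    (∏ i ∈ I, ∏ j ∈ Iᶜ, ((t⁻¹ * ζ i - t * ζ j) / (ζ i - ζ j))) * ∏ k ∈ I, p k

namespace TRSAux

open Polynomial Matrix

variable {K : Type*} [Field K] {n : ℕ}

/-- Coefficient matrix of the polynomials `g_j = ∏_{k ≠ j} (X - w k)`. -/
noncomputable def coeffMat (w : Fin n → K) : Matrix (Fin n) (Fin n) K :=
  Matrix.of fun c j => (∏ k ∈ univ.erase j, (X - C (w k))).coeff c

lemma eval_mat (x w : Fin n → K) :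
    (Matrix.of fun i j => ∏ k ∈ univ.erase j, (x i - w k)) =
      Matrix.vandermonde x * coeffMat w := by
  ext i j
  have hdeg : (∏ k ∈ univ.erase j, (X - C (w k))).natDegree < n := by
    calc (∏ k ∈ univ.erase j, (X - C (w k))).natDegree
        ≤ ∑ k ∈ univ.erase j, (X - C (w k)).natDegree := natDegree_prod_le _ _
      _ = (univ.erase j).card := by simp [natDegree_X_sub_C]
      _ = n - 1 := by simp
      _ < n := Nat.sub_lt j.pos one_pos
  have h := Polynomial.eval_eq_sum_range' hdeg (x i)
  have hev : (∏ k ∈ univ.erase j, (x i - w k)) =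
      Polynomial.eval (x i) (∏ k ∈ univ.erase j, (X - C (w k))) := by
    simp [eval_prod]
  simp only [Matrix.mul_apply, Matrix.vandermonde, Matrix.of_apply, coeffMat]
  rw [hev, h, ← Fin.sum_univ_eq_sum_range]
  exact Finset.sum_congr rfl fun c _ => (mul_comm _ _)

lemma diag_mat (w : Fin n → K) (hw : Function.Injective w) :
    (Matrix.of fun m j : Fin n => ∏ k ∈ univ.erase j, (w m - w k)) =
      Matrix.diagonal (fun j => ∏ k ∈ univ.erase j, (w j - w k)) := by
  ext m j
  by_cases h : m = j
  · subst h; simp [Matrix.diagonal]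
  · rw [Matrix.diagonal_apply_ne _ h, Matrix.of_apply]
    exact Finset.prod_eq_zero (Finset.mem_erase.mpr ⟨h, Finset.mem_univ m⟩) (by simp)

lemma detG_mul (x w : Fin n → K) (hw : Function.Injective w) :
    (Matrix.of fun i j => ∏ k ∈ univ.erase j, (x i - w k)).det *
        (Matrix.vandermonde w).det =
      (Matrix.vandermonde x).det * ∏ j, ∏ k ∈ univ.erase j, (w j - w k) := by
  rw [eval_mat x w, Matrix.det_mul]
  have h2 : (Matrix.vandermonde w).det * (coeffMat w).det =
      ∏ j, ∏ k ∈ univ.erase j, (w j - w k) := by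
    rw [← Matrix.det_mul, ← eval_mat w w, diag_mat w hw, Matrix.det_diagonal]
  rw [mul_assoc, mul_comm (coeffMat w).det, h2]

lemma pp_mul {ι κ : Type*} (s : Finset ι) (f : ι → Finset κ) (a b : ι → κ → K) :
    (∏ i ∈ s, ∏ j ∈ f i, (a i j * b i j)) =
      (∏ i ∈ s, ∏ j ∈ f i, a i j) * (∏ i ∈ s, ∏ j ∈ f i, b i j) := by
  simp_rw [Finset.prod_mul_distrib]

lemma erase_eq_union (j : Fin n) : (univ : Finset (Fin n)).erase j = Iio j ∪ Ioi j := by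
  ext k
  simp only [mem_erase, mem_univ, and_true, mem_union, mem_Iio, mem_Ioi]
  exact ⟨fun h => h.lt_or_gt, fun h => h.elim ne_of_lt ne_of_gt⟩

lemma prod_erase_const (c : K) :
    (∏ j : Fin n, ∏ _k ∈ univ.erase j, c) =
      (∏ i : Fin n, ∏ _j ∈ Ioi i, c) * (∏ i : Fin n, ∏ _j ∈ Ioi i, c) := by
  have hdisj : ∀ j : Fin n, Disjoint (Iio j) (Ioi j) := fun j =>
    Finset.disjoint_left.mpr fun k hk hk' => absurd (mem_Ioi.mp hk') (not_lt.mpr (le_of_lt (mem_Iio.mp hk)))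
  have h1 : (∏ j : Fin n, ∏ _k ∈ univ.erase j, c) =
      (∏ j : Fin n, ∏ _k ∈ Iio j, c) * (∏ j : Fin n, ∏ _k ∈ Ioi j, c) := by
    rw [← Finset.prod_mul_distrib]
    exact Finset.prod_congr rfl fun j _ => by
      rw [erase_eq_union j, Finset.prod_union (hdisj j)]
  have h2 : (∏ j : Fin n, ∏ _k ∈ Iio j, c) = ∏ i : Fin n, ∏ _j ∈ Ioi i, c :=
    Finset.prod_comm' (by simp)
  rw [h1, h2]

end TRSAux

open TRSAux Polynomial Matrix in
/-- The top Hamiltonian: H_n = det(L) = ∏ p_k (so det L is independent of ζ). -/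
theorem stmt5 {K : Type*} [Field K] (n : ℕ) (ζ p : Fin n → K) (t : K)
    (hζ : Function.Injective ζ) (hζ0 : ∀ i, ζ i ≠ 0) (ht : t ≠ 0) :
    tRSHam n ζ p t n = (tRSLax n ζ p t).det
  ∧ (tRSLax n ζ p t).det = ∏ k, p k := by
  classical
  set w : Fin n → K := fun k => t ^ 2 * ζ k with hwdef
  have ht2 : (t : K) ^ 2 ≠ 0 := pow_ne_zero 2 ht
  have hwinj : Function.Injective w := fun a b hab => hζ (mul_left_cancel₀ ht2 hab)
  set d : Fin n → K := fun i => ∏ k ∈ univ.erase i, (ζ i - ζ k) with hddef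
  have hdne : ∀ i, d i ≠ 0 := by
    intro i
    refine Finset.prod_ne_zero_iff.mpr fun k hk => sub_ne_zero.mpr fun h => ?_
    exact (Finset.mem_erase.mp hk).1 (hζ h.symm)
  set G : Matrix (Fin n) (Fin n) K :=
    Matrix.of (fun i j => ∏ k ∈ univ.erase j, (ζ i - w k)) with hGdef
  set Q : K := ∏ i : Fin n, ∏ _j ∈ Ioi i, t with hQdef
  have hQ : Q ≠ 0 :=
    Finset.prod_ne_zero_iff.mpr fun i _ => Finset.prod_ne_zero_iff.mpr fun j _ => ht
  -- rewrite the Lax matrix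
  have hL : tRSLax n ζ p t = Matrix.of (fun i j =>
      (p j * ∏ _k ∈ univ.erase j, t⁻¹) *
        (Matrix.of fun i j => (fun i => (d i)⁻¹) i * G i j) i j) := by
    ext i j
    simp only [tRSLax, Matrix.of_apply, hGdef]
    show _ = _ * ((d i)⁻¹ * _)
    have hfac : ∀ k, t⁻¹ * ζ i - t * ζ k = t⁻¹ * (ζ i - w k) := by
      intro k
      simp only [hwdef]
      field_simp
    rw [Finset.prod_congr rfl fun k _ => hfac k, Finset.prod_mul_distrib, div_eq_mul_inv]
    ring
  -- determinant of vandermonde w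
  have hVw : (Matrix.vandermonde w).det = (Q * Q) * (Matrix.vandermonde ζ).det := by
    rw [Matrix.det_vandermonde, Matrix.det_vandermonde]
    have : ∀ i : Fin n, ∀ j ∈ Ioi i, w j - w i = (t * t) * (ζ j - ζ i) := by
      intro i j _
      simp only [hwdef]; ring
    rw [Finset.prod_congr rfl fun i _ => Finset.prod_congr rfl (this i),
      pp_mul _ _ (fun _ _ => t * t) (fun i j => ζ j - ζ i),
      pp_mul _ _ (fun _ _ => t) (fun _ _ => t)]
  -- diagonal product
  have hDiag : (∏ j, ∏ k ∈ univ.erase j, (w j - w k)) =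
      ((Q * Q) * (Q * Q)) * ∏ j, d j := by
    have : ∀ j : Fin n, ∀ k ∈ univ.erase j, w j - w k = (t * t) * (ζ j - ζ k) := by
      intro j k _
      simp only [hwdef]; ring
    rw [Finset.prod_congr rfl fun j _ => Finset.prod_congr rfl (this j),
      pp_mul _ _ (fun _ _ => t * t) (fun j k => ζ j - ζ k),
      pp_mul _ _ (fun _ _ => t) (fun _ _ => t),
      prod_erase_const (n := n) t]
  -- compute det G
  have hVz : (Matrix.vandermonde ζ).det ≠ 0 := Matrix.det_vandermonde_ne_zero_iff.mpr hζ
  have hGdet : G.det = (Q * Q) * ∏ j, d j := by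
    have h := detG_mul ζ w hwinj
    rw [hVw, hDiag] at h
    have h' : G.det * ((Q * Q) * (Matrix.vandermonde ζ).det) =
        ((Q * Q) * ∏ j, d j) * ((Q * Q) * (Matrix.vandermonde ζ).det) := by
      rw [h]; ring
    exact mul_right_cancel₀ (mul_ne_zero (mul_ne_zero hQ hQ) hVz) h'
  -- compute det L
  have key : (tRSLax n ζ p t).det = ∏ k, p k := by
    rw [hL, Matrix.det_mul_row, Matrix.det_mul_column, hGdet]
    rw [Finset.prod_mul_distrib]
    have hinv : (∏ j : Fin n, ∏ _k ∈ univ.erase j, t⁻¹) = (Q * Q)⁻¹ := by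
      rw [Finset.prod_congr rfl fun j _ => Finset.prod_inv_distrib _,
        Finset.prod_inv_distrib, prod_erase_const (n := n) t, mul_inv]
    rw [hinv]
    have hprodd : (∏ i, d i) ≠ 0 := Finset.prod_ne_zero_iff.mpr fun i _ => hdne i
    field_simp
    rw [Finset.prod_div_distrib, Finset.prod_const_one, mul_assoc, one_div, inv_mul_cancel₀ hprodd, mul_one]
  refine ⟨?_, key⟩
  have hps : powersetCard n (univ : Finset (Fin n)) = {univ} := by
    have := Finset.powersetCard_self (univ : Finset (Fin n))
    simpa using this
  rw [key]
  simp [tRSHam, hps]
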